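/- Let R be a Dedekind domain which is not a field, let K be its field of fractions, and let 𝔞 be a nonzero fractional ideal of R. For each height-one prime v of R let K_v denote the v-adic completion of K, let O_v ⊆ K_v denote the ring of v-adic integers, and let 𝔞_v ⊆ K_v denote the O_v-submodule of K_v generated by the image of 𝔞. Then there is an R-linear map Φ : K → ⨁_v K_v/𝔞_v (direct sum over all height-one primes v of R) whose v-th component sends x ∈ K to the class of x in K_v/𝔞_v; moreover Φ is surjective and its kernel is exactly 𝔞. Consequently there is an isomorphism of R-modules K/𝔞 ≅ ⨁_v K_v/𝔞_v. -/

import Mathlib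

set_option synthInstance.maxHeartbeats 1000000
set_option maxHeartbeats 1000000

open IsDedekindDomain IsDedekindDomain.HeightOneSpectrum DirectSum
open scoped Classical

variable (R : Type*) [CommRing R] [IsDedekindDomain R]
  (K : Type*) [Field K] [Algebra R K] [IsFractionRing R K]

/-- `𝔞_v`: the `O_v`-submodule of the `v`-adic completion `K_v` of `K` generated by the image
of the fractional ideal `𝔞` under the canonical map `K → K_v`. -/
noncomputable def localSpan (a : FractionalIdeal (nonZeroDivisors R) K)
    (v : HeightOneSpectrum R) :
    Submodule (v.adicCompletionIntegers K) (v.adicCompletion K) :=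
  Submodule.span (v.adicCompletionIntegers K)
    (algebraMap K (v.adicCompletion K) '' ((a : Submodule R K) : Set K))

-- B: dvd of ideals from counts
lemma dvd_of_count (I J : Ideal R) (hI : I ≠ 0) (hJ : J ≠ 0)
    (h : ∀ v : HeightOneSpectrum R,
      (Associates.mk v.asIdeal).count (Associates.mk I).factors ≤
      (Associates.mk v.asIdeal).count (Associates.mk J).factors) : I ∣ J := by
  classical
  set cI := fun v : HeightOneSpectrum R =>
    (Associates.mk v.asIdeal).count (Associates.mk I).factors with hcI
  set cJ := fun v : HeightOneSpectrum R =>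
    (Associates.mk v.asIdeal).count (Associates.mk J).factors with hcJ
  have hfJ := Ideal.finite_mulSupport (R := R) hJ
  have hfI := Ideal.finite_mulSupport (R := R) hI
  have hsub : (Function.mulSupport fun v : HeightOneSpectrum R =>
      v.asIdeal ^ (cJ v - cI v)) ⊆ (Function.mulSupport fun v : HeightOneSpectrum R =>
      v.maxPowDividing J) := by
    intro v hv
    simp only [Function.mem_mulSupport, HeightOneSpectrum.maxPowDividing] at *
    intro hcon
    apply hv
    have : cJ v = 0 := by
      by_contra hne
      have h1 : v.asIdeal ^ (cJ v) ≤ v.asIdeal := Ideal.pow_le_self hne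
      rw [hcon] at h1
      rw [Ideal.one_eq_top] at h1; exact v.isPrime.ne_top (top_le_iff.mp h1)
    rw [this, Nat.zero_sub, pow_zero]
  have key : J = I * ∏ᶠ v : HeightOneSpectrum R, v.asIdeal ^ (cJ v - cI v) := by
    conv_lhs => rw [← Ideal.finprod_heightOneSpectrum_factorization hJ]
    rw [← Ideal.finprod_heightOneSpectrum_factorization hI,
      ← finprod_mul_distrib hfI (hfJ.subset hsub)]
    apply finprod_congr
    intro v
    rw [HeightOneSpectrum.maxPowDividing, HeightOneSpectrum.maxPowDividing, ← pow_add,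
      Nat.add_sub_cancel' (h v)]
  exact ⟨_, key⟩

-- A: membership in R from valuations
lemma mem_one_of_val (x : K) (h : ∀ v : HeightOneSpectrum R, v.valuation K x ≤ 1) :
    x ∈ (1 : FractionalIdeal (nonZeroDivisors R) K) := by
  obtain ⟨r, s, rfl⟩ := IsLocalization.exists_mk'_eq (nonZeroDivisors R) x
  rw [FractionalIdeal.mem_one_iff]
  by_cases hr : r = 0
  · exact ⟨0, by rw [map_zero, hr, IsLocalization.mk'_zero]⟩
  have hs : (s : R) ≠ 0 := nonZeroDivisors.coe_ne_zero s
  have hcount : ∀ v : HeightOneSpectrum R,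
      (Associates.mk v.asIdeal).count (Associates.mk (Ideal.span {(s : R)})).factors ≤
      (Associates.mk v.asIdeal).count (Associates.mk (Ideal.span {r})).factors := by
    intro v
    have hv := h v
    rw [v.valuation_of_mk'] at hv
    have hsv : v.intValuation (s : R) ≠ 0 := v.intValuation_ne_zero _ hs
    have hrs : v.intValuation r ≤ v.intValuation (s : R) := by
      have := mul_le_mul_left hv (v.intValuation (s : R))
      rwa [div_mul_cancel₀ _ hsv, one_mul] at this
    rw [IsDedekindDomain.HeightOneSpectrum.intValuation_apply,
      IsDedekindDomain.HeightOneSpectrum.intValuation_apply,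
      v.intValuationDef_if_neg hr, v.intValuationDef_if_neg hs, WithZero.exp_le_exp,
      neg_le_neg_iff, Int.ofNat_le] at hrs
    exact hrs
  have hdvd : Ideal.span {(s : R)} ∣ Ideal.span {r} :=
    dvd_of_count R _ _ (by simpa using hs) (by simpa using hr) hcount
  have hle : Ideal.span {r} ≤ Ideal.span {(s : R)} := Ideal.le_of_dvd hdvd
  have : (s : R) ∣ r := by
    rw [← Ideal.span_singleton_le_span_singleton]; exact hle
  obtain ⟨t, rfl⟩ := this
  exact ⟨t, by rw [eq_comm, IsLocalization.mk'_eq_iff_eq_mul, ← map_mul, mul_comm]⟩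

-- ball in K as R-submodule
def ballK (v : HeightOneSpectrum R) (c : WithZero (Multiplicative ℤ)) : Submodule R K where
  carrier := {x | v.valuation K x ≤ c}
  add_mem' {x y} hx hy := le_trans ((v.valuation K).map_add x y) (max_le hx hy)
  zero_mem' := by simp only [Set.mem_setOf_eq, Valuation.map_zero]; exact zero_le'
  smul_mem' r x hx := by
    simp only [Set.mem_setOf_eq, Algebra.smul_def, Valuation.map_mul]
    calc v.valuation K (algebraMap R K r) * v.valuation K x ≤ 1 * c :=
          mul_le_mul' (v.valuation_le_one r) hx
      _ = c := one_mul c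

-- ball in K_v as O_v-submodule
def ballKv (v : HeightOneSpectrum R) (c : WithZero (Multiplicative ℤ)) :
    Submodule (v.adicCompletionIntegers K) (v.adicCompletion K) where
  carrier := {y | Valued.v y ≤ c}
  add_mem' {x y} hx hy := le_trans (Valued.v.map_add x y) (max_le hx hy)
  zero_mem' := by simp only [Set.mem_setOf_eq, Valuation.map_zero]; exact zero_le'
  smul_mem' r x hx := by
    have : (r : v.adicCompletion K) • x = (r : v.adicCompletion K) * x := rfl
    simp only [Set.mem_setOf_eq] at *
    calc Valued.v ((r : v.adicCompletion K) * x) = Valued.v (r : v.adicCompletion K) * Valued.v x :=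
          Valued.v.map_mul _ _
      _ ≤ 1 * c := mul_le_mul' r.2 hx
      _ = c := one_mul c

lemma valued_coe (v : HeightOneSpectrum R) (x : K) :
    Valued.v (algebraMap K (v.adicCompletion K) x) = v.valuation K x := by
  letI : Valued K (WithZero (Multiplicative ℤ)) := v.adicValued
  exact valuedAdicCompletion_eq_valuation' (R := R) (K := K) (v := v) x

-- existence of a local generator (element of max valuation)
lemma exists_gen (a : FractionalIdeal (nonZeroDivisors R) K) (ha : a ≠ 0)
    (v : HeightOneSpectrum R) :
    ∃ g : K, g ∈ (a : Submodule R K) ∧ g ≠ 0 ∧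
      ∀ x ∈ (a : Submodule R K), v.valuation K x ≤ v.valuation K g := by
  obtain ⟨T, hT⟩ := a.fg_of_isNoetherianRing le_rfl
  have hTne : T.Nonempty := by
    rcases T.eq_empty_or_nonempty with h | h
    · exfalso; apply ha
      rw [← FractionalIdeal.coeToSubmodule_eq_bot, ← hT, h]
      simp
    · exact h
  obtain ⟨g, hgT, hgmax⟩ := T.exists_max_image (fun x => v.valuation K x) hTne
  have hmem : ∀ x ∈ (a : Submodule R K), v.valuation K x ≤ v.valuation K g := by
    intro x hx
    rw [← hT] at hx
    refine Submodule.span_induction ?_ ?_ ?_ ?_ hx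
    · intro y hy; exact hgmax y hy
    · simp only [Valuation.map_zero]; exact zero_le'
    · intro y z _ _ hy hz; exact le_trans ((v.valuation K).map_add y z) (max_le hy hz)
    · intro r y _ hy
      calc v.valuation K (r • y) = v.valuation K (algebraMap R K r) * v.valuation K y := by
            rw [Algebra.smul_def, Valuation.map_mul]
        _ ≤ 1 * v.valuation K y := mul_le_mul' (v.valuation_le_one r) le_rfl
        _ = v.valuation K y := one_mul _
        _ ≤ v.valuation K g := hy
  have hgmem : g ∈ (a : Submodule R K) := by
    rw [← hT]; exact Submodule.subset_span hgT
  refine ⟨g, hgmem, ?_, hmem⟩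
  -- g ≠ 0
  intro hg0
  obtain ⟨x₀, hx₀ne, hx₀mem⟩ := a.exists_ne_zero_mem_isInteger ha
  have h1 : v.valuation K (algebraMap R K x₀) ≤ v.valuation K g :=
    hmem _ (by rwa [FractionalIdeal.mem_coe])
  rw [hg0, Valuation.map_zero, le_zero_iff, Valuation.zero_iff] at h1
  exact hx₀ne ((map_eq_zero_iff _ (IsFractionRing.injective R K)).mp h1)

lemma localSpan_eq_ball (a : FractionalIdeal (nonZeroDivisors R) K)
    (v : HeightOneSpectrum R) (g : K) (hgmem : g ∈ (a : Submodule R K)) (hg0 : g ≠ 0)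
    (hgmax : ∀ x ∈ (a : Submodule R K), v.valuation K x ≤ v.valuation K g) :
    localSpan R K a v = ballKv R K v (v.valuation K g) := by
  apply le_antisymm
  · rw [localSpan, Submodule.span_le]
    rintro - ⟨x, hx, rfl⟩
    show Valued.v (algebraMap K (v.adicCompletion K) x) ≤ v.valuation K g
    rw [valued_coe]
    exact hgmax x hx
  · intro y hy
    have hy' : Valued.v y ≤ v.valuation K g := hy
    set G := algebraMap K (v.adicCompletion K) g with hG
    have hGval : Valued.v G = v.valuation K g := valued_coe R K v g
    have hgv0 : v.valuation K g ≠ 0 := by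
      rw [Valuation.ne_zero_iff]; exact hg0
    have hG0 : G ≠ 0 := by
      intro h
      rw [h, Valuation.map_zero] at hGval
      exact hgv0 hGval.symm
    have hc : Valued.v (y * G⁻¹) ≤ 1 := by
      rw [Valuation.map_mul, map_inv₀, hGval]
      calc Valued.v y * (v.valuation K g)⁻¹ ≤ v.valuation K g * (v.valuation K g)⁻¹ :=
            mul_le_mul_left hy' _
        _ = 1 := mul_inv_cancel₀ hgv0
    have hyeq : y = (⟨y * G⁻¹, hc⟩ : v.adicCompletionIntegers K) • G := by
      show y = y * G⁻¹ * G
      rw [mul_assoc, inv_mul_cancel₀ hG0, mul_one]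
    rw [hyeq]
    exact Submodule.smul_mem _ _ (Submodule.subset_span ⟨g, hgmem, rfl⟩)

-- Lemma C
lemma finite_lt_one (y : K) (hy : y ≠ 0) :
    {v : HeightOneSpectrum R | v.valuation K y < 1}.Finite := by
  obtain ⟨r, s, rfl⟩ := IsLocalization.exists_mk'_eq (nonZeroDivisors R) y
  have hr : r ≠ 0 := by
    intro h; apply hy; rw [h, IsLocalization.mk'_zero]
  have hsub : {v : HeightOneSpectrum R | v.valuation K (IsLocalization.mk' K r s) < 1} ⊆
      {v : HeightOneSpectrum R | v.asIdeal ∣ Ideal.span {r}} := by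
    intro v hv
    simp only [Set.mem_setOf_eq] at *
    rw [v.valuation_of_mk'] at hv
    have hsv : v.intValuation (s : R) ≠ 0 :=
      v.intValuation_ne_zero _ (nonZeroDivisors.coe_ne_zero s)
    have h1 : v.intValuation r < v.intValuation (s : R) := by
      rw [div_lt_iff₀ (zero_lt_iff.mpr hsv), one_mul] at hv
      exact hv
    have h2 : v.intValuation r < 1 := lt_of_lt_of_le h1 (v.intValuation_le_one _)
    rwa [IsDedekindDomain.HeightOneSpectrum.intValuation_lt_one_iff_dvd] at h2
  exact (Ideal.finite_factors
    (by rw [Ne, Ideal.zero_eq_bot, Ideal.span_singleton_eq_bot]; exact hr)).subset hsub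

lemma mem_of_val_le_gen (a : FractionalIdeal (nonZeroDivisors R) K) (ha : a ≠ 0)
    (g : HeightOneSpectrum R → K) (hgmem : ∀ v, g v ∈ (a : Submodule R K))
    (x : K) (h : ∀ v : HeightOneSpectrum R, v.valuation K x ≤ v.valuation K (g v)) :
    x ∈ (a : Submodule R K) := by
  rw [FractionalIdeal.mem_coe]
  have hxy : ∀ y ∈ a⁻¹, x * y ∈ (1 : FractionalIdeal (nonZeroDivisors R) K) := by
    intro y hy
    apply mem_one_of_val
    intro v
    have hgy : g v * y ∈ (1 : FractionalIdeal (nonZeroDivisors R) K) := by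
      rw [FractionalIdeal.mem_inv_iff ha] at hy
      rw [mul_comm]
      exact hy _ (FractionalIdeal.mem_coe.mp (hgmem v))
    obtain ⟨r, hr⟩ := (FractionalIdeal.mem_one_iff _).mp hgy
    calc v.valuation K (x * y) = v.valuation K x * v.valuation K y := Valuation.map_mul _ _ _
      _ ≤ v.valuation K (g v) * v.valuation K y := mul_le_mul_left (h v) _
      _ = v.valuation K (g v * y) := (Valuation.map_mul _ _ _).symm
      _ = v.valuation K (algebraMap R K r) := by rw [hr]
      _ ≤ 1 := v.valuation_le_one r
  have hspan : FractionalIdeal.spanSingleton (nonZeroDivisors R) x * a⁻¹ ≤ 1 := by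
    rw [FractionalIdeal.mul_le]
    intro i hi j hj
    rw [FractionalIdeal.mem_spanSingleton] at hi
    obtain ⟨c, rfl⟩ := hi
    have := hxy j hj
    have h2 : c • x * j = c • (x * j) := smul_mul_assoc c x j
    rw [h2]
    exact Submodule.smul_mem _ _ (hxy j hj)
  have hfin : FractionalIdeal.spanSingleton (nonZeroDivisors R) x ≤ a := by
    have h3 := mul_le_mul_left hspan a
    simp only [one_mul] at h3
    rwa [mul_assoc, inv_mul_cancel₀ ha, mul_one] at h3
  exact hfin (FractionalIdeal.mem_spanSingleton_self _ x)

-- density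
lemma dense_exists (v : HeightOneSpectrum R) (y : v.adicCompletion K)
    (c : WithZero (Multiplicative ℤ)) (hc : c ≠ 0) :
    ∃ x : K, Valued.v (y - algebraMap K (v.adicCompletion K) x) ≤ c := by
  letI : Valued K (WithZero (Multiplicative ℤ)) := v.adicValued
  have hdense : DenseRange (algebraMap K (v.adicCompletion K)) :=
    IsDedekindDomain.HeightOneSpectrum.denseRange_algebraMap (K := K) (v := v)
  have hy : y ∈ closure (Set.range (algebraMap K (v.adicCompletion K))) := by
    rw [hdense.closure_range]; trivial
  rw [mem_closure_iff_nhds] at hy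
  have hnhds : {z : v.adicCompletion K | Valued.v (z - y) < (Units.mk0 c hc : _)} ∈ nhds y := by
    obtain ⟨t, ht⟩ := IsDedekindDomain.HeightOneSpectrum.valuedAdicCompletion_surjective (K := K) (v := v) c
    have ht0 : t ≠ 0 := by rintro rfl; rw [Valuation.map_zero] at ht; exact hc ht.symm
    rw [Valued.mem_nhds]
    refine ⟨Units.mk0 (Valued.v.restrict t) ((Valuation.ne_zero_iff _).mpr ht0), ?_⟩
    intro z hz
    have hz' : Valued.v.restrict (z - y) < Valued.v.restrict t := hz
    show Valued.v (z - y) < c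
    rw [← ht]; exact (Valuation.restrict_lt_iff _).mp hz'
  obtain ⟨z, hz, x, rfl⟩ := hy _ hnhds
  refine ⟨x, ?_⟩
  have : Valued.v (algebraMap K (v.adicCompletion K) x - y) < c := hz
  rw [← Valuation.map_neg, neg_sub] at this
  exact le_of_lt this

lemma val_div_le (w : HeightOneSpectrum R) (z d : R) (hd : algebraMap R K d ≠ 0) (c : WithZero (Multiplicative ℤ))
    (h : w.valuation K (algebraMap R K z) ≤ w.valuation K (algebraMap R K d) * c) :
    w.valuation K (algebraMap R K z * (algebraMap R K d)⁻¹) ≤ c := by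
  have hdv : w.valuation K (algebraMap R K d) ≠ 0 := by rw [Valuation.ne_zero_iff]; exact hd
  rw [Valuation.map_mul, map_inv₀]
  calc w.valuation K (algebraMap R K z) * (w.valuation K (algebraMap R K d))⁻¹
      ≤ w.valuation K (algebraMap R K d) * c * (w.valuation K (algebraMap R K d))⁻¹ :=
        mul_le_mul_left h _
    _ = c := by rw [mul_comm _ c, mul_assoc, mul_inv_cancel₀ hdv, mul_one]

lemma approx (a : FractionalIdeal (nonZeroDivisors R) K) (ha : a ≠ 0)
    (g : HeightOneSpectrum R → K) (hgmem : ∀ v, g v ∈ (a : Submodule R K))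
    (hg0 : ∀ v, g v ≠ 0)
    (hgmax : ∀ v : HeightOneSpectrum R, ∀ x ∈ (a : Submodule R K),
      v.valuation K x ≤ v.valuation K (g v))
    (v0 : HeightOneSpectrum R) (x₀ : K) :
    ∃ x : K, v0.valuation K (x - x₀) ≤ v0.valuation K (g v0) ∧
      ∀ w ≠ v0, w.valuation K x ≤ w.valuation K (g w) := by
  classical
  -- common denominator
  obtain ⟨d₁, hd₁mem, hd₁⟩ := a.isFractional
  obtain ⟨d₂, hd₂⟩ := IsLocalization.exists_integer_multiple (nonZeroDivisors R) x₀
  set d : R := d₁ * (d₂ : R) with hd_def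
  have hdmem : d ∈ nonZeroDivisors R := mul_mem hd₁mem d₂.2
  have hd0 : d ≠ 0 := nonZeroDivisors.ne_zero hdmem
  have hdK : algebraMap R K d ≠ 0 := by
    rw [map_ne_zero_iff _ (IsFractionRing.injective R K)]; exact hd0
  -- numerators
  have hint : ∀ w, IsLocalization.IsInteger R (algebraMap R K d * g w) := by
    intro w
    obtain ⟨ew, hew⟩ := hd₁ (g w) (hgmem w)
    refine ⟨ew * d₂, ?_⟩
    rw [map_mul, hew]
    rw [hd_def, map_mul]
    rw [Algebra.smul_def] at *
    ring
  choose e he using hint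
  obtain ⟨r₀, hr₀⟩ : IsLocalization.IsInteger R (algebraMap R K d * x₀) := by
    obtain ⟨r, hr⟩ := hd₂
    refine ⟨r * d₁, ?_⟩
    rw [map_mul, hr, hd_def, map_mul]
    rw [Algebra.smul_def] at *
    ring
  have he0 : ∀ w, e w ≠ 0 := by
    intro w hw
    have h2 := he w
    rw [hw, map_zero] at h2
    exact (mul_ne_zero hdK (hg0 w)) h2.symm
  -- exponents
  set m : HeightOneSpectrum R → ℕ := fun w =>
    (Associates.mk w.asIdeal).count (Associates.mk (Ideal.span {e w})).factors with hm_def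
  have hval_e : ∀ w : HeightOneSpectrum R,
      w.valuation K (algebraMap R K (e w)) = WithZero.exp (-(m w : ℤ)) := by
    intro w
    rw [valuation_of_algebraMap, IsDedekindDomain.HeightOneSpectrum.intValuation_apply,
      w.intValuationDef_if_neg (he0 w)]
  -- the finite bad set
  have hTfin : {w : HeightOneSpectrum R | w.valuation K (algebraMap R K (e w)) < 1}.Finite := by
    have h1 : {w : HeightOneSpectrum R | w.valuation K (algebraMap R K (e w)) < 1} ⊆
        {w : HeightOneSpectrum R | w.valuation K (algebraMap R K (e v0)) < 1} := by
      intro w hw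
      simp only [Set.mem_setOf_eq] at *
      refine lt_of_le_of_lt ?_ hw
      rw [he w, he v0, Valuation.map_mul, Valuation.map_mul]
      exact mul_le_mul_right (hgmax w _ (hgmem v0)) _
    refine (finite_lt_one R K _ ?_).subset h1
    rw [Ne, map_eq_zero_iff _ (IsFractionRing.injective R K)]
    exact he0 v0
  set s : Finset (HeightOneSpectrum R) := hTfin.toFinset ∪ {v0} with hs_def
  -- CRT
  obtain ⟨y, hy⟩ := IsDedekindDomain.exists_forall_sub_mem_ideal (s := s)
    (fun w => w.asIdeal) m
    (fun w _ => Ideal.prime_of_isPrime w.ne_bot w.isPrime)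
    (fun i _ j _ hij hP => hij (HeightOneSpectrum.ext hP))
    (fun w => if (w : HeightOneSpectrum R) = v0 then r₀ else 0)
  -- key inequality
  have key : ∀ (w : HeightOneSpectrum R) (z : R), z ∈ w.asIdeal ^ (m w) →
      w.valuation K (algebraMap R K z * (algebraMap R K d)⁻¹) ≤ w.valuation K (g w) := by
    intro w z hz
    apply val_div_le R K w z d hdK
    have h1 : w.valuation K (algebraMap R K z) ≤ w.valuation K (algebraMap R K (e w)) := by
      rw [valuation_of_algebraMap, hval_e w,
        w.intValuation_le_pow_iff_dvd, Ideal.dvd_span_singleton]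
      exact hz
    rw [he w, Valuation.map_mul] at h1
    exact h1
  refine ⟨algebraMap R K y * (algebraMap R K d)⁻¹, ?_, ?_⟩
  · -- at v0
    have hx₀ : x₀ = algebraMap R K r₀ * (algebraMap R K d)⁻¹ := by
      rw [hr₀, mul_comm ((algebraMap R K) d) x₀, mul_assoc, mul_inv_cancel₀ hdK, mul_one]
    have hv0s : v0 ∈ s := Finset.mem_union_right _ (Finset.mem_singleton_self v0)
    have hsub := hy v0 hv0s
    rw [if_pos rfl] at hsub
    have : algebraMap R K y * (algebraMap R K d)⁻¹ - x₀ =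
        algebraMap R K (y - r₀) * (algebraMap R K d)⁻¹ := by
      rw [hx₀, map_sub, sub_mul]
    rw [this]
    exact key v0 _ hsub
  · -- away from v0
    intro w hw
    by_cases hws : w ∈ hTfin.toFinset
    · have hsub := hy w (Finset.mem_union_left _ hws)
      rw [if_neg hw, sub_zero] at hsub
      exact key w _ hsub
    · -- w not in bad set: valuation of e w is 1
      have hTw : ¬ w.valuation K (algebraMap R K (e w)) < 1 := by
        intro hcon
        exact hws (hTfin.mem_toFinset.mpr hcon)
      have hew1 : w.valuation K (algebraMap R K (e w)) = 1 := by
        refine le_antisymm ?_ (not_lt.mp hTw)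
        rw [valuation_of_algebraMap]
        exact w.intValuation_le_one _
      apply val_div_le R K w y d hdK
      have : w.valuation K (algebraMap R K d) * w.valuation K (g w) =
          w.valuation K (algebraMap R K (e w)) := by rw [he w, Valuation.map_mul]
      rw [this, hew1, valuation_of_algebraMap]
      exact w.intValuation_le_one _


/-- **Lemma 5.1 ('Lemma 8.1').**  Let `R` be a Dedekind domain which is not a field, `K` its
field of fractions, and `𝔞` a nonzero fractional ideal of `R`.  Then there is an `R`-linear
map `Φ : K → ⨁_v K_v/𝔞_v` (direct sum over the height-one primes `v` of `R`), whose `v`-th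
component sends `x ∈ K` to the class of `x` in `K_v/𝔞_v`, which is surjective with kernel
exactly `𝔞`; consequently `K/𝔞 ≅ ⨁_v K_v/𝔞_v` as `R`-modules. -/

theorem stmt8 (hR : ¬ IsField R)
    (a : FractionalIdeal (nonZeroDivisors R) K) (ha : a ≠ 0) :
    ∃ Φ : K →ₗ[R] ⨁ v : HeightOneSpectrum R,
        (v.adicCompletion K ⧸ localSpan R K a v),
      (∀ (x : K) (v : HeightOneSpectrum R),
          Φ x v = Submodule.Quotient.mk (algebraMap K (v.adicCompletion K) x)) ∧
      Function.Surjective Φ ∧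
      LinearMap.ker Φ = (a : Submodule R K) ∧
      Nonempty ((K ⧸ (a : Submodule R K)) ≃ₗ[R]
        (⨁ v : HeightOneSpectrum R, (v.adicCompletion K ⧸ localSpan R K a v))) := by
  classical
  choose g hg1 hg2 hg3 using exists_gen R K a ha
  have hloc : ∀ v : HeightOneSpectrum R,
      localSpan R K a v = ballKv R K v (v.valuation K (g v)) :=
    fun v => localSpan_eq_ball R K a v (g v) (hg1 v) (hg2 v) (hg3 v)
  have hgv0 : ∀ v : HeightOneSpectrum R, v.valuation K (g v) ≠ 0 := fun v => by
    rw [Valuation.ne_zero_iff]; exact hg2 v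
  have hmemloc : ∀ (x : K) (v : HeightOneSpectrum R),
      algebraMap K (v.adicCompletion K) x ∈ localSpan R K a v ↔
        v.valuation K x ≤ v.valuation K (g v) := by
    intro x v
    rw [hloc v]
    show Valued.v (algebraMap K (v.adicCompletion K) x) ≤ _ ↔ _
    rw [valued_coe]
  obtain ⟨x₁, hx₁0, hx₁mem⟩ := a.exists_ne_zero_mem_isInteger ha
  have hx₁K : algebraMap R K x₁ ≠ 0 := by
    rw [map_ne_zero_iff _ (IsFractionRing.injective R K)]; exact hx₁0
  have hfin : ∀ x : K, {v : HeightOneSpectrum R |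
      algebraMap K (v.adicCompletion K) x ∉ localSpan R K a v}.Finite := by
    intro x
    by_cases hx : x = 0
    · refine Set.Finite.subset Set.finite_empty ?_
      intro v hv
      exact absurd (by rw [hx, map_zero]; exact Submodule.zero_mem _) hv
    · have hsub : {v : HeightOneSpectrum R |
          algebraMap K (v.adicCompletion K) x ∉ localSpan R K a v} ⊆
          {v : HeightOneSpectrum R | v.valuation K (algebraMap R K x₁ * x⁻¹) < 1} := by
        intro v hv
        simp only [Set.mem_setOf_eq, hmemloc x v] at hv
        simp only [Set.mem_setOf_eq]
        by_contra hcon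
        push_neg at hcon
        apply hv
        have hxv : v.valuation K x ≠ 0 := by rw [Valuation.ne_zero_iff]; exact hx
        have h2 : v.valuation K x ≤ v.valuation K (algebraMap R K x₁) := by
          have h3 := mul_le_mul_left hcon (v.valuation K x)
          rwa [one_mul, Valuation.map_mul, map_inv₀, mul_assoc,
            inv_mul_cancel₀ hxv, mul_one] at h3
        exact le_trans h2 (hg3 v _ (by rwa [FractionalIdeal.mem_coe]))
      exact (finite_lt_one R K _ (mul_ne_zero hx₁K (inv_ne_zero hx))).subset hsub
  set Φfun : K → ⨁ v : HeightOneSpectrum R, (v.adicCompletion K ⧸ localSpan R K a v) :=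
    fun x => DFinsupp.mk (hfin x).toFinset
      (fun v => Submodule.Quotient.mk
        (algebraMap K ((v : HeightOneSpectrum R).adicCompletion K) x)) with hPhifun
  have happly : ∀ (x : K) (v : HeightOneSpectrum R),
      Φfun x v = Submodule.Quotient.mk (algebraMap K (v.adicCompletion K) x) := by
    intro x v
    by_cases hv : v ∈ (hfin x).toFinset
    · simp only [hPhifun, DFinsupp.mk_apply, dif_pos hv]
    · have hvmem : algebraMap K (v.adicCompletion K) x ∈ localSpan R K a v := by
        by_contra hcon
        exact hv ((hfin x).mem_toFinset.mpr hcon)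
      rw [show Φfun x v = 0 from by simp only [hPhifun, DFinsupp.mk_apply, dif_neg hv],
        (Submodule.Quotient.mk_eq_zero _).mpr hvmem]
  set Φ : K →ₗ[R] ⨁ v : HeightOneSpectrum R, (v.adicCompletion K ⧸ localSpan R K a v) :=
    { toFun := Φfun
      map_add' := by
        intro x y
        refine DFinsupp.ext fun v => ?_
        rw [DirectSum.add_apply, happly, happly, happly, map_add]
        rfl
      map_smul' := by
        intro r x
        refine DFinsupp.ext fun v => ?_
        rw [RingHom.id_apply, DFinsupp.smul_apply, happly, happly]
        rw [show algebraMap K (v.adicCompletion K) (r • x)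
            = r • algebraMap K (v.adicCompletion K) x by
          rw [Algebra.smul_def, Algebra.smul_def, map_mul, ← IsScalarTower.algebraMap_apply]]
        rfl } with hPhi
  have happly' : ∀ (x : K) (v : HeightOneSpectrum R),
      Φ x v = Submodule.Quotient.mk (algebraMap K (v.adicCompletion K) x) := happly
  have hker : LinearMap.ker Φ = (a : Submodule R K) := by
    ext x
    rw [LinearMap.mem_ker]
    constructor
    · intro h
      apply mem_of_val_le_gen R K a ha g hg1 x
      intro v
      have h1 : Φ x v = 0 := by rw [h]; rfl
      rw [happly' x v, Submodule.Quotient.mk_eq_zero, hmemloc x v] at h1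
      exact h1
    · intro hx
      refine DFinsupp.ext fun v => ?_
      rw [DirectSum.zero_apply, happly' x v, Submodule.Quotient.mk_eq_zero, hmemloc x v]
      exact hg3 v x hx
  have hsurj : Function.Surjective Φ := by
    intro q
    induction q using DirectSum.induction_on with
    | zero => exact ⟨0, map_zero Φ⟩
    | of v q' =>
      obtain ⟨y, rfl⟩ := Submodule.Quotient.mk_surjective _ q'
      obtain ⟨x₀, hx₀⟩ := dense_exists R K v y (v.valuation K (g v)) (hgv0 v)
      obtain ⟨x, hxv, hxw⟩ := approx R K a ha g hg1 hg2 hg3 v x₀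
      refine ⟨x, ?_⟩
      refine DFinsupp.ext fun w => ?_
      rw [happly' x w]
      by_cases hw : w = v
      · subst hw
        rw [DirectSum.of_eq_same, Submodule.Quotient.eq, hloc w]
        show Valued.v (algebraMap K (w.adicCompletion K) x - y) ≤ _
        have hdecomp : algebraMap K (w.adicCompletion K) x - y =
            algebraMap K (w.adicCompletion K) (x - x₀) +
              (algebraMap K (w.adicCompletion K) x₀ - y) := by
          rw [map_sub]; ring
        rw [hdecomp]
        refine le_trans (Valued.v.map_add _ _) (max_le ?_ ?_)
        · rw [valued_coe]; exact hxv
        · rw [← Valuation.map_neg, neg_sub]; exact hx₀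
      · rw [DirectSum.of_eq_of_ne _ _ _ hw,
          Submodule.Quotient.mk_eq_zero, hmemloc x w]
        exact hxw w hw
    | add q1 q2 h1 h2 =>
      obtain ⟨z1, rfl⟩ := h1
      obtain ⟨z2, rfl⟩ := h2
      exact ⟨z1 + z2, map_add Φ z1 z2⟩
  letI : AddCommGroup (⨁ v : HeightOneSpectrum R, (v.adicCompletion K ⧸ localSpan R K a v)) :=
    inferInstance
  exact ⟨Φ, happly', hsurj, hker, ⟨hker ▸ Φ.quotKerEquivOfSurjective hsurj⟩⟩
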